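/- The function x ↦ √x · arctanh(√x) is convex on the interval (0,1). -/

import Mathlib

open Real

/-- The inverse hyperbolic tangent, `arctanh x = (1/2) log ((1+x)/(1-x))`. -/
noncomputable def arctanh (x : ℝ) : ℝ := (1 / 2) * Real.log ((1 + x) / (1 - x))

lemma arctanh_eq {x : ℝ} (h1 : -1 < x) (h2 : x < 1) :
    arctanh x = (1 / 2) * (Real.log (1 + x) - Real.log (1 - x)) := by
  unfold arctanh
  rw [Real.log_div (by linarith) (by linarith)]

lemma hasDerivAt_arctanh {x : ℝ} (h1 : -1 < x) (h2 : x < 1) :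
    HasDerivAt arctanh (1 / (1 - x ^ 2)) x := by
  have h3 : (0:ℝ) < 1 + x := by linarith
  have h4 : (0:ℝ) < 1 - x := by linarith
  have l1 : HasDerivAt (fun y : ℝ => Real.log (1 + y)) (1 / (1 + x)) x := by
    have h : HasDerivAt (fun y : ℝ => 1 + y) 1 x := by
      simpa using (hasDerivAt_id x).const_add (1:ℝ)
    simpa [one_div, Function.comp_def] using (Real.hasDerivAt_log (ne_of_gt h3)).comp x h
  have l2 : HasDerivAt (fun y : ℝ => Real.log (1 - y)) ((1 - x)⁻¹ * (-1)) x := by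
    have h : HasDerivAt (fun y : ℝ => 1 - y) (-1) x := by
      exact (hasDerivAt_id' x).const_sub (1:ℝ)
    simpa [Function.comp_def] using (Real.hasDerivAt_log (ne_of_gt h4)).comp x h
  have hd : HasDerivAt (fun y => (1 / 2) * (Real.log (1 + y) - Real.log (1 - y)))
      ((1 / 2) * (1 / (1 + x) - (1 - x)⁻¹ * (-1))) x := (l1.sub l2).const_mul _
  have heq : (1 / 2) * (1 / (1 + x) - (1 - x)⁻¹ * (-1)) = 1 / (1 - x ^ 2) := by
    have : (1:ℝ) - x ^ 2 = (1 + x) * (1 - x) := by ring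
    rw [this]
    field_simp
    ring
  rw [heq] at hd
  refine hd.congr_of_eventuallyEq ?_
  filter_upwards [Ioo_mem_nhds h1 h2] with y hy
  exact arctanh_eq hy.1 hy.2

lemma hasDerivAt_aux {t : ℝ} (h1 : -1 < t) (h2 : t < 1) :
    HasDerivAt (fun t : ℝ => t / (1 - t ^ 2)) ((1 + t ^ 2) / (1 - t ^ 2) ^ 2) t := by
  have hne : (1:ℝ) - t ^ 2 ≠ 0 := by nlinarith
  have hden : HasDerivAt (fun t : ℝ => 1 - t ^ 2) (-(2 * t)) t := by
    simpa using (hasDerivAt_pow 2 t).const_sub (1:ℝ)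
  have := (hasDerivAt_id t).div hden hne
  refine this.congr_deriv ?_
  rw [id_eq]
  field_simp
  ring

/-- Key inequality: `arctanh s ≤ s / (1 - s²)` for `0 ≤ s < 1`. -/
lemma arctanh_le {s : ℝ} (h0 : 0 ≤ s) (h1 : s < 1) : arctanh s ≤ s / (1 - s ^ 2) := by
  set p : ℝ → ℝ := fun t => t / (1 - t ^ 2) - arctanh t with hp
  have hder : ∀ t ∈ Set.Ioo (-1:ℝ) 1,
      HasDerivAt p ((1 + t ^ 2) / (1 - t ^ 2) ^ 2 - 1 / (1 - t ^ 2)) t := fun t ht =>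
    (hasDerivAt_aux ht.1 ht.2).sub (hasDerivAt_arctanh ht.1 ht.2)
  have key : MonotoneOn p (Set.Ico 0 1) := by
    apply monotoneOn_of_deriv_nonneg (convex_Ico 0 1)
    · intro t ht
      have ht' : t ∈ Set.Ioo (-1:ℝ) 1 := ⟨by linarith [ht.1], ht.2⟩
      exact ((hder t ht').differentiableAt.continuousAt).continuousWithinAt
    · rw [interior_Ico]
      intro t ht
      exact (hder t ⟨by linarith [ht.1], ht.2⟩).differentiableAt.differentiableWithinAt
    · rw [interior_Ico]
      intro t ht
      rw [(hder t ⟨by linarith [ht.1], ht.2⟩).deriv]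
      have hne : (0:ℝ) < 1 - t ^ 2 := by nlinarith [ht.1, ht.2]
      have : (1 + t ^ 2) / (1 - t ^ 2) ^ 2 - 1 / (1 - t ^ 2)
          = 2 * t ^ 2 / (1 - t ^ 2) ^ 2 := by
        field_simp
        ring
      rw [this]
      positivity
  have hmem : s ∈ Set.Ico (0:ℝ) 1 := ⟨h0, h1⟩
  have h := key (Set.left_mem_Ico.2 one_pos) hmem h0
  have a0 : arctanh 0 = 0 := by simp [arctanh]
  simp only [hp, a0] at h
  norm_num at h
  linarith

/-- The function `x ↦ √x * arctanh (√x)` is convex on `(0, 1)`. -/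
theorem convexOn_sqrt_mul_arctanh_sqrt :
    ConvexOn ℝ (Set.Ioo 0 1) (fun x : ℝ => Real.sqrt x * arctanh (Real.sqrt x)) := by
  -- basic facts about √x on (0,1)
  have hs : ∀ x ∈ Set.Ioo (0:ℝ) 1, 0 < Real.sqrt x ∧ Real.sqrt x < 1 ∧ Real.sqrt x ^ 2 = x :=
    fun x hx => ⟨Real.sqrt_pos.2 hx.1, by
      rw [show (1:ℝ) = Real.sqrt 1 by simp]
      exact (Real.sqrt_lt_sqrt hx.1.le hx.2), Real.sq_sqrt hx.1.le⟩
  -- derivative of the composed arctanh(√x)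
  have hA : ∀ x ∈ Set.Ioo (0:ℝ) 1,
      HasDerivAt (fun x => arctanh (Real.sqrt x))
        (1 / (1 - x) * (1 / (2 * Real.sqrt x))) x := by
    intro x hx
    obtain ⟨hs0, hs1, hsq⟩ := hs x hx
    have h := (hasDerivAt_arctanh (by linarith) hs1).comp x (Real.hasDerivAt_sqrt hx.1.ne')
    simpa [hsq, Function.comp_def] using h
  -- derivative of f
  have hF : ∀ x ∈ Set.Ioo (0:ℝ) 1,
      HasDerivAt (fun x : ℝ => Real.sqrt x * arctanh (Real.sqrt x))
        (arctanh (Real.sqrt x) / (2 * Real.sqrt x) + 1 / (2 * (1 - x))) x := by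
    intro x hx
    obtain ⟨hs0, hs1, hsq⟩ := hs x hx
    have h := (Real.hasDerivAt_sqrt hx.1.ne').mul (hA x hx)
    refine h.congr_deriv ?_
    have h1x : (1:ℝ) - x ≠ 0 := by
      have := hx.2; intro h; apply absurd this; linarith [h]
    field_simp
  -- derivative of G x = arctanh(√x)/(2√x)
  have hG : ∀ x ∈ Set.Ioo (0:ℝ) 1,
      HasDerivAt (fun x => arctanh (Real.sqrt x) / (2 * Real.sqrt x))
        ((1 / (1 - x) * (1 / (2 * Real.sqrt x)) * (2 * Real.sqrt x)
          - arctanh (Real.sqrt x) * (2 * (1 / (2 * Real.sqrt x)))) / (2 * Real.sqrt x) ^ 2) x := by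
    intro x hx
    obtain ⟨hs0, hs1, hsq⟩ := hs x hx
    exact (hA x hx).div ((Real.hasDerivAt_sqrt hx.1.ne').const_mul 2)
      (by positivity)
  -- G is monotone on (0,1)
  have hGmono : MonotoneOn (fun x => arctanh (Real.sqrt x) / (2 * Real.sqrt x))
      (Set.Ioo (0:ℝ) 1) := by
    apply monotoneOn_of_deriv_nonneg (convex_Ioo 0 1)
    · exact fun x hx => ((hG x hx).differentiableAt.continuousAt).continuousWithinAt
    · rw [interior_Ioo]
      exact fun x hx => (hG x hx).differentiableAt.differentiableWithinAt
    · rw [interior_Ioo]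
      intro x hx
      rw [(hG x hx).deriv]
      obtain ⟨hs0, hs1, hsq⟩ := hs x hx
      have h1x : (0:ℝ) < 1 - x := by linarith [hx.2]
      have hkey : arctanh (Real.sqrt x) ≤ Real.sqrt x / (1 - x) := by
        have := arctanh_le hs0.le hs1
        rwa [hsq] at this
      apply div_nonneg _ (by positivity)
      have e1 : 1 / (1 - x) * (1 / (2 * Real.sqrt x)) * (2 * Real.sqrt x) = 1 / (1 - x) := by
        field_simp
      have e2 : arctanh (Real.sqrt x) * (2 * (1 / (2 * Real.sqrt x)))
          = arctanh (Real.sqrt x) / Real.sqrt x := by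
        field_simp
      rw [e1, e2]
      rw [sub_nonneg, div_le_div_iff₀ hs0 h1x]
      calc arctanh (Real.sqrt x) * (1 - x) ≤ Real.sqrt x / (1 - x) * (1 - x) := by
            apply mul_le_mul_of_nonneg_right hkey h1x.le
        _ = Real.sqrt x := by field_simp
        _ = 1 * Real.sqrt x := by ring
  -- H is monotone on (0,1)
  have hHmono : MonotoneOn (fun x : ℝ => 1 / (2 * (1 - x))) (Set.Ioo (0:ℝ) 1) := by
    intro x hx y hy hxy
    have hy1 : (0:ℝ) < 2 * (1 - y) := by linarith [hy.2]
    apply one_div_le_one_div_of_le hy1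
    linarith
  -- now apply the convexity criterion
  apply MonotoneOn.convexOn_of_deriv (convex_Ioo 0 1)
  · exact fun x hx => ((hF x hx).differentiableAt.continuousAt).continuousWithinAt
  · rw [interior_Ioo]
    exact fun x hx => (hF x hx).differentiableAt.differentiableWithinAt
  · rw [interior_Ioo]
    intro x hx y hy hxy
    rw [(hF x hx).deriv, (hF y hy).deriv]
    exact add_le_add (hGmono hx hy hxy) (hHmono hx hy hxy)
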